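/- Let σ > 0 and φ(ζ) = √(2/π)·∫₀^{ζ/(2σ)} exp(-t²/2) dt. For any positive reals r₁,…,rₙ, ∏ᵢ φ(rᵢ) ≤ φ((∏ᵢ rᵢ)^{1/n})ⁿ, with equality if and only if all rᵢ are equal. -/

import Mathlib

open Real Set MeasureTheory intervalIntegral

noncomputable def phi (σ ζ : ℝ) : ℝ :=
  Real.sqrt (2/Real.pi) * ∫ t in (0:ℝ)..(ζ/(2*σ)), Real.exp (-t^2/2)

namespace Stmt10Aux

noncomputable def fg (t : ℝ) : ℝ := Real.exp (-t^2/2)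
noncomputable def Fg (u : ℝ) : ℝ := ∫ t in (0:ℝ)..u, fg t

lemma fg_cont : Continuous fg := by unfold fg; continuity

lemma fg_pos (t : ℝ) : 0 < fg t := Real.exp_pos _

lemma Fg_hasDeriv (u : ℝ) : HasDerivAt Fg (fg u) u :=
  intervalIntegral.integral_hasDerivAt_right (fg_cont.intervalIntegrable _ _)
    (fg_cont.aestronglyMeasurable.stronglyMeasurableAtFilter) fg_cont.continuousAt

lemma Fg_cont : Continuous Fg :=
  continuous_iff_continuousAt.2 fun u => (Fg_hasDeriv u).continuousAt

lemma Fg_pos {u : ℝ} (hu : 0 < u) : 0 < Fg u :=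
  intervalIntegral_pos_of_pos (fg_cont.intervalIntegrable _ _) (fun t => fg_pos t) hu

lemma fg_hasDeriv (u : ℝ) : HasDerivAt fg (-u * fg u) u := by
  have h1 : HasDerivAt (fun t : ℝ => -t^2/2) (-u) u := by
    have := ((hasDerivAt_pow 2 u).neg.div_const 2)
    convert this using 1 <;> (try rfl) <;> (simp; ring)
  have h2 := h1.exp
  convert h2 using 1 <;> (try rfl)
  unfold fg; ring

/-- N u = u * fg u -/
lemma N_hasDeriv (u : ℝ) : HasDerivAt (fun u => u * fg u) ((1 - u^2) * fg u) u := by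
  have := (hasDerivAt_id u).mul (fg_hasDeriv u)
  convert this using 1 <;> (try rfl)
  simp only [id_eq]
  ring

noncomputable def Dg (u : ℝ) : ℝ := u * fg u - (1 - u^2) * Fg u

lemma Dg_hasDeriv (u : ℝ) : HasDerivAt Dg (2 * u * Fg u) u := by
  have h2 : HasDerivAt (fun u : ℝ => (1 - u^2) * Fg u)
      ((-(2*u)) * Fg u + (1 - u^2) * fg u) u := by
    have ha : HasDerivAt (fun u : ℝ => 1 - u^2) (-(2*u)) u := by
      have := (hasDerivAt_pow 2 u).const_sub 1
      convert this using 1 <;> (try rfl) <;> (simp)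
    exact ha.mul (Fg_hasDeriv u)
  have := (N_hasDeriv u).sub h2
  convert this using 1 <;> (try rfl); ring

lemma Dg_pos {u : ℝ} (hu : 0 < u) : 0 < Dg u := by
  have hc : Continuous Dg :=
    continuous_iff_continuousAt.2 fun u => (Dg_hasDeriv u).continuousAt
  have hmono : StrictMonoOn Dg (Ici 0) := by
    apply strictMonoOn_of_deriv_pos (convex_Ici 0) hc.continuousOn
    intro x hx
    rw [interior_Ici] at hx
    rw [(Dg_hasDeriv x).deriv]
    have hx' : 0 < x := hx
    have := Fg_pos hx'
    positivity
  have h0 : Dg 0 = 0 := by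
    unfold Dg Fg
    simp
  have := hmono self_mem_Ici (le_of_lt hu) hu
  rwa [h0] at this

noncomputable def qg (u : ℝ) : ℝ := u * fg u / Fg u

lemma qg_hasDeriv {u : ℝ} (hu : 0 < u) :
    HasDerivAt qg (-(fg u * Dg u) / (Fg u)^2) u := by
  have := (N_hasDeriv u).div (Fg_hasDeriv u) (ne_of_gt (Fg_pos hu))
  convert this using 1 <;> (try rfl)
  unfold Dg; ring

lemma qg_anti : StrictAntiOn qg (Ioi 0) := by
  apply strictAntiOn_of_deriv_neg (convex_Ioi 0)
  · intro x hx
    exact ((qg_hasDeriv hx).continuousAt).continuousWithinAt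
  · intro x hx
    rw [interior_Ioi] at hx
    rw [(qg_hasDeriv hx).deriv]
    have h1 := fg_pos x
    have h2 := Dg_pos hx
    have h3 := Fg_pos hx
    have : 0 < fg x * Dg x := mul_pos h1 h2
    have : -(fg x * Dg x) < 0 := by linarith
    exact div_neg_of_neg_of_pos this (by positivity)

lemma phi_eq (σ ζ : ℝ) : phi σ ζ = Real.sqrt (2/Real.pi) * Fg (ζ/(2*σ)) := rfl

lemma sqrt_c_pos : 0 < Real.sqrt (2/Real.pi) := by
  apply Real.sqrt_pos.2
  positivity

lemma phi_pos {σ : ℝ} (hσ : 0 < σ) {ζ : ℝ} (hζ : 0 < ζ) : 0 < phi σ ζ := by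
  rw [phi_eq]
  exact mul_pos sqrt_c_pos (Fg_pos (by positivity))

noncomputable def g (σ ξ : ℝ) : ℝ := Real.log (phi σ (Real.exp ξ))

lemma g_hasDeriv {σ : ℝ} (hσ : 0 < σ) (ξ : ℝ) :
    HasDerivAt (g σ) (qg (Real.exp ξ / (2*σ))) ξ := by
  set u := Real.exp ξ / (2*σ) with hu_def
  have hu : 0 < u := by positivity
  have h1 : HasDerivAt (fun ξ : ℝ => Real.exp ξ / (2*σ)) u ξ :=
    (Real.hasDerivAt_exp ξ).div_const _
  have h3 : HasDerivAt (fun ξ : ℝ => Fg (Real.exp ξ / (2*σ))) (fg u * u) ξ :=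
    by have := (Fg_hasDeriv u).comp ξ h1; exact this
  have h4 := h3.const_mul (Real.sqrt (2/Real.pi))
  have hne : Real.sqrt (2/Real.pi) * Fg u ≠ 0 :=
    ne_of_gt (mul_pos sqrt_c_pos (Fg_pos hu))
  have h5 := h4.log hne
  have hgeq : g σ = fun ξ : ℝ => Real.log (Real.sqrt (2/Real.pi) * Fg (Real.exp ξ / (2*σ))) := by
    funext x; rw [g, phi_eq]
  rw [hgeq]
  convert h5 using 1
  unfold qg
  have hc := ne_of_gt sqrt_c_pos
  have hF := ne_of_gt (Fg_pos hu)
  rw [← hu_def]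
  field_simp

lemma g_cont {σ : ℝ} (hσ : 0 < σ) : Continuous (g σ) :=
  continuous_iff_continuousAt.2 fun ξ => (g_hasDeriv hσ ξ).continuousAt

lemma g_strictConcave {σ : ℝ} (hσ : 0 < σ) : StrictConcaveOn ℝ univ (g σ) := by
  apply StrictAnti.strictConcaveOn_univ_of_deriv (g_cont hσ)
  intro x y hxy
  rw [(g_hasDeriv hσ x).deriv, (g_hasDeriv hσ y).deriv]
  apply qg_anti
  · exact mem_Ioi.2 (by positivity)
  · exact mem_Ioi.2 (by positivity)
  · exact (div_lt_div_iff_of_pos_right (by positivity)).2 (Real.exp_lt_exp.2 hxy)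

end Stmt10Aux

theorem stmt10 (σ : ℝ) (hσ : 0 < σ) (n : ℕ) (hn : 1 ≤ n)
    (r : Fin n → ℝ) (hr : ∀ i, 0 < r i) :
    (∏ i, phi σ (r i)) ≤ (phi σ ((∏ i, r i) ^ ((1:ℝ)/n)))^n ∧
    ((∏ i, phi σ (r i)) = (phi σ ((∏ i, r i) ^ ((1:ℝ)/n)))^n ↔
      ∀ i j, r i = r j) := by
  classical
  have hn0 : (n:ℝ) ≠ 0 := Nat.cast_ne_zero.2 (by omega)
  have hnpos : (0:ℝ) < n := by
    have : (0:ℕ) < n := by omega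
    exact_mod_cast this
  set G : ℝ := (∏ i, r i) ^ ((1:ℝ)/n) with hG_def
  have hprod_pos : (0:ℝ) < ∏ i, r i := Finset.prod_pos (fun i _ => hr i)
  have hGpos : 0 < G := Real.rpow_pos_of_pos hprod_pos _
  have hw : ∑ _i : Fin n, (1/(n:ℝ)) = 1 := by
    rw [Finset.sum_const, Finset.card_univ, Fintype.card_fin, nsmul_eq_mul]
    field_simp
  have hlogG : ∑ i, (1/(n:ℝ)) • Real.log (r i) = Real.log G := by
    rw [hG_def, Real.log_rpow hprod_pos,
      Real.log_prod (fun i _ => ne_of_gt (hr i)), Finset.mul_sum]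
    simp [smul_eq_mul]
  have hphi_pos : ∀ i, 0 < phi σ (r i) := fun i => Stmt10Aux.phi_pos hσ (hr i)
  have hprodphi : (0:ℝ) < ∏ i, phi σ (r i) := Finset.prod_pos (fun i _ => hphi_pos i)
  have hphiG : 0 < phi σ G := Stmt10Aux.phi_pos hσ hGpos
  have hgB : Stmt10Aux.g σ (Real.log G) = Real.log (phi σ G) := by
    unfold Stmt10Aux.g; rw [Real.exp_log hGpos]
  have hsum_eq : ∑ i, (1/(n:ℝ)) • Stmt10Aux.g σ (Real.log (r i))
      = (1/(n:ℝ)) * Real.log (∏ i, phi σ (r i)) := by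
    rw [Real.log_prod (fun i _ => ne_of_gt (hphi_pos i)), Finset.mul_sum]
    apply Finset.sum_congr rfl
    intro i _
    rw [smul_eq_mul]
    congr 1
    unfold Stmt10Aux.g
    rw [Real.exp_log (hr i)]
  have hconc := Stmt10Aux.g_strictConcave hσ
  -- scaling helper
  have hscale : ∀ S L : ℝ, (1/(n:ℝ)) * S < L → S < (n:ℝ) * L := by
    intro S L h
    have := mul_lt_mul_of_pos_left h hnpos
    calc S = (n:ℝ) * ((1/(n:ℝ)) * S) := by field_simp
      _ < (n:ℝ) * L := this
  have hscale' : ∀ S L : ℝ, (1/(n:ℝ)) * S ≤ L → S ≤ (n:ℝ) * L := by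
    intro S L h
    have := mul_le_mul_of_nonneg_left h hnpos.le
    calc S = (n:ℝ) * ((1/(n:ℝ)) * S) := by field_simp
      _ ≤ (n:ℝ) * L := this
  have hle : (∏ i, phi σ (r i)) ≤ (phi σ G)^n := by
    have h1 := hconc.concaveOn.le_map_sum (t := Finset.univ)
      (w := fun _ : Fin n => (1/(n:ℝ))) (p := fun i => Real.log (r i))
      (fun i _ => by positivity) hw (fun i _ => Set.mem_univ _)
    rw [hlogG, hgB, hsum_eq] at h1
    have h2 := hscale' _ _ h1
    rw [← Real.log_pow] at h2
    exact (Real.log_le_log_iff hprodphi (pow_pos hphiG n)).1 h2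
  refine ⟨hle, ?_, ?_⟩
  · -- equality implies all equal
    intro heq
    by_contra hne
    push_neg at hne
    obtain ⟨i, j, hij⟩ := hne
    have hp : ∃ j' ∈ (Finset.univ : Finset (Fin n)), ∃ k ∈ (Finset.univ : Finset (Fin n)),
        Real.log (r j') ≠ Real.log (r k) := by
      refine ⟨i, Finset.mem_univ _, j, Finset.mem_univ _, fun hl => hij ?_⟩
      rw [← Real.exp_log (hr i), ← Real.exp_log (hr j), hl]
    have h1 := hconc.lt_map_sum (t := Finset.univ)
      (w := fun _ : Fin n => (1/(n:ℝ))) (p := fun i => Real.log (r i))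
      (fun i _ => by positivity) hw (fun i _ => Set.mem_univ _) hp
    rw [hlogG, hgB, hsum_eq] at h1
    have h2 := hscale _ _ h1
    rw [← Real.log_pow] at h2
    have h3 := (Real.log_lt_log_iff hprodphi (pow_pos hphiG n)).1 h2
    exact absurd heq (ne_of_lt h3)
  · -- all equal implies equality
    intro h
    have i0 : Fin n := ⟨0, by omega⟩
    have hall : ∀ i, r i = r i0 := fun i => h i i0
    have hprod : ∏ i, r i = (r i0)^n := by
      rw [Finset.prod_congr rfl (fun i _ => hall i), Finset.prod_const,
        Finset.card_univ, Fintype.card_fin]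
    have hGeq : G = r i0 := by
      rw [hG_def, hprod, ← Real.rpow_natCast (r i0) n,
        ← Real.rpow_mul (hr i0).le, mul_one_div, div_self hn0, Real.rpow_one]
    rw [hGeq]
    rw [Finset.prod_congr rfl (fun i _ => by rw [hall i]), Finset.prod_const,
      Finset.card_univ, Fintype.card_fin]
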